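/- Let α ∈ [0,1] and let G be a bipartite graph with parts A, B of sizes at most n. If H is a subgraph of G with |E(H)| ≥ (1−α)n² and E(H) is a clique in L(G)², then G contains a subgraph isomorphic to the complete bipartite graph K_{r,r} with r = (1 − √(2α))·n. -/

import Mathlib

/-- Two edges of `G` at distance at most 2 (adjacency or equality in `L(G)²`). -/
def EdgesClose {V : Type*} (G : SimpleGraph V) (e f : Sym2 V) : Prop :=
  ∃ u v, u ∈ e ∧ v ∈ f ∧ (u = v ∨ G.Adj u v)

section Aux

variable {V : Type*} [Fintype V] {G : SimpleGraph V} {A B : Set V}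

/-- Neighborhoods (in a subgraph) of vertices of `A` lie in `B`. -/
lemma nbhd_sub (hdisj : Disjoint A B)
    (hbip : ∀ x y, G.Adj x y → (x ∈ A ∧ y ∈ B) ∨ (x ∈ B ∧ y ∈ A))
    (H : G.Subgraph) {a : V} (ha : a ∈ A) : H.neighborSet a ⊆ B := by
  intro x hx
  have hG : G.Adj a x := SimpleGraph.Subgraph.Adj.adj_sub hx
  rcases hbip a x hG with ⟨_, hxB⟩ | ⟨haB, _⟩
  · exact hxB
  · exact absurd haB (Set.disjoint_left.mp hdisj ha)

/-- Edge count of a subgraph of a bipartite graph equals the sum of degrees on one side. -/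
lemma deg_sum (hdisj : Disjoint A B)
    (hbip : ∀ x y, G.Adj x y → (x ∈ A ∧ y ∈ B) ∨ (x ∈ B ∧ y ∈ A))
    (H : G.Subgraph) :
    H.edgeSet.ncard = ∑ a ∈ (Set.toFinite A).toFinset, (H.neighborSet a).ncard := by
  classical
  have key : (Set.toFinite H.edgeSet).toFinset =
      (Set.toFinite A).toFinset.biUnion
        (fun a => ((Set.toFinite (H.neighborSet a)).toFinset).image (fun x => s(a, x))) := by
    ext e
    simp only [Set.Finite.mem_toFinset, Finset.mem_biUnion, Finset.mem_image]
    constructor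
    · induction e with
      | _ u v =>
        intro he
        have huv : H.Adj u v := he
        rcases hbip u v huv.adj_sub with ⟨huA, _⟩ | ⟨_, hvA⟩
        · exact ⟨u, huA, v, huv, rfl⟩
        · exact ⟨v, hvA, u, huv.symm, Sym2.eq_swap⟩
    · rintro ⟨a, _, x, hx, rfl⟩
      exact hx
  have hinj : ∀ a ∈ A, Set.InjOn (fun x => s(a, x)) (H.neighborSet a) := by
    intro a ha x hx y hy hxy
    rcases Sym2.eq_iff.mp hxy with ⟨_, h⟩ | ⟨h1, _⟩
    · exact h
    · exact absurd (h1 ▸ ha : y ∈ A) (Set.disjoint_right.mp hdisj (nbhd_sub hdisj hbip H ha hy))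
  rw [Set.ncard_eq_toFinset_card _ (Set.toFinite H.edgeSet), key, Finset.card_biUnion]
  · refine Finset.sum_congr rfl fun a ha => ?_
    rw [Set.Finite.mem_toFinset] at ha
    rw [Finset.card_image_of_injOn (fun x hx y hy => hinj a ha
      (by simpa using hx) (by simpa using hy)),
      Set.ncard_eq_toFinset_card _ (Set.toFinite (H.neighborSet a))]
  · intro a ha a' ha' hne
    rw [Finset.mem_coe, Set.Finite.mem_toFinset] at ha ha'
    simp only [Function.onFun, Finset.disjoint_left, Finset.mem_image, Set.Finite.mem_toFinset]
    rintro e ⟨x, hx, rfl⟩ ⟨x', hx', hee⟩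
    rcases Sym2.eq_iff.mp hee with ⟨h1, _⟩ | ⟨h1, _⟩
    · exact hne (h1.symm)
    · exact absurd (h1 ▸ ha') (Set.disjoint_right.mp hdisj
        (nbhd_sub hdisj hbip H ha hx))

/-- There are many vertices of `A` of high degree in `H`. -/
lemma side (hdisj : Disjoint A B)
    (hbip : ∀ x y, G.Adj x y → (x ∈ A ∧ y ∈ B) ∨ (x ∈ B ∧ y ∈ A))
    {n : ℕ} (hA : A.ncard ≤ n) (hB : B.ncard ≤ n)
    {α : ℝ} (hα0 : 0 ≤ α) {H : G.Subgraph}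
    (hsize : (1 - α) * (n : ℝ) ^ 2 ≤ (H.edgeSet.ncard : ℝ))
    (hn : 0 < (n : ℝ)) (hs1 : Real.sqrt (2 * α) < 1) :
    ∃ S : Finset V, ↑S ⊆ A ∧ (1 - Real.sqrt (2 * α)) * n ≤ (S.card : ℝ) ∧
      ∀ a ∈ S, (n : ℝ) - Real.sqrt (2 * α) * n ≤ ((H.neighborSet a).ncard : ℝ) := by
  classical
  set s : ℝ := Real.sqrt (2 * α) with hs
  have hs0 : 0 ≤ s := Real.sqrt_nonneg _
  have hs2 : s ^ 2 = 2 * α := Real.sq_sqrt (by linarith)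
  have hpos : 0 < (n : ℝ) - s * n := by nlinarith
  set k : ℕ := ⌈(n : ℝ) - s * n⌉₊ with hk
  set AF : Finset V := (Set.toFinite A).toFinset with hAF
  set S : Finset V := AF.filter (fun a => k ≤ (H.neighborSet a).ncard) with hSdef
  have hSA : ↑S ⊆ A := by
    intro a ha
    have h2 : a ∈ S := ha
    rw [hSdef] at h2
    have h3 : a ∈ AF := Finset.mem_of_mem_filter a h2
    simpa [hAF] using h3
  have hk1 : (n : ℝ) - s * n ≤ (k : ℝ) := Nat.le_ceil _
  have hk2 : (k : ℝ) ≤ n := by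
    have : k ≤ n := Nat.ceil_le.mpr (by nlinarith)
    exact_mod_cast this
  have hk3 : 1 ≤ (k : ℝ) := by
    have : 0 < k := Nat.ceil_pos.mpr hpos
    exact_mod_cast this
  have hk4 : (k : ℝ) < (n : ℝ) - s * n + 1 := Nat.ceil_lt_add_one hpos.le
  have hdegS : ∀ a ∈ S, (n : ℝ) - s * n ≤ ((H.neighborSet a).ncard : ℝ) := by
    intro a ha
    rw [hSdef] at ha
    have hka : k ≤ (H.neighborSet a).ncard := (Finset.mem_filter.mp ha).2
    calc (n : ℝ) - s * n ≤ (k : ℝ) := hk1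
      _ ≤ _ := by exact_mod_cast hka
  refine ⟨S, hSA, ?_, hdegS⟩
  -- Now the counting argument.
  have hdegub : ∀ a ∈ AF, ((H.neighborSet a).ncard : ℝ) ≤ n := by
    intro a ha
    have haA : a ∈ A := by simpa [hAF] using ha
    have h1 : (H.neighborSet a).ncard ≤ B.ncard :=
      Set.ncard_le_ncard (nbhd_sub hdisj hbip H haA) (Set.toFinite B)
    exact_mod_cast h1.trans hB
  have hAFc : (AF.card : ℝ) ≤ n := by
    have : AF.card = A.ncard := (Set.ncard_eq_toFinset_card _ _).symm
    rw [this]; exact_mod_cast hA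
  have hsum : (1 - α) * (n : ℝ) ^ 2 ≤ ∑ a ∈ AF, ((H.neighborSet a).ncard : ℝ) := by
    have := deg_sum hdisj hbip H
    calc (1 - α) * (n : ℝ) ^ 2 ≤ (H.edgeSet.ncard : ℝ) := hsize
      _ = _ := by rw [this]; push_cast; rfl
  set Sc : Finset V := AF.filter (fun a => ¬ k ≤ (H.neighborSet a).ncard) with hScdef
  have hsplit : ∑ a ∈ S, ((H.neighborSet a).ncard : ℝ)
      + ∑ a ∈ Sc, ((H.neighborSet a).ncard : ℝ)
      = ∑ a ∈ AF, ((H.neighborSet a).ncard : ℝ) :=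
    Finset.sum_filter_add_sum_filter_not AF _ _
  have hcards : S.card + Sc.card = AF.card :=
    Finset.card_filter_add_card_filter_not _
  have hb1 : ∑ a ∈ S, ((H.neighborSet a).ncard : ℝ) ≤ (S.card : ℝ) * n := by
    calc ∑ a ∈ S, ((H.neighborSet a).ncard : ℝ) ≤ S.card • (n : ℝ) :=
        Finset.sum_le_card_nsmul _ _ _ (fun a ha =>
          hdegub a (Finset.mem_of_mem_filter a ha))
      _ = (S.card : ℝ) * n := by rw [nsmul_eq_mul]
  have hb2 : ∑ a ∈ Sc, ((H.neighborSet a).ncard : ℝ) ≤ (Sc.card : ℝ) * ((k : ℝ) - 1) := by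
    calc ∑ a ∈ Sc, ((H.neighborSet a).ncard : ℝ) ≤ Sc.card • ((k : ℝ) - 1) :=
        Finset.sum_le_card_nsmul _ _ _ (by
          intro a ha
          rw [hScdef] at ha
          have h1 : ¬ k ≤ (H.neighborSet a).ncard := (Finset.mem_filter.mp ha).2
          have h2 : (H.neighborSet a).ncard + 1 ≤ k := Nat.lt_of_not_le h1
          have h3 : ((H.neighborSet a).ncard : ℝ) + 1 ≤ k := by exact_mod_cast h2
          linarith)
      _ = (Sc.card : ℝ) * ((k : ℝ) - 1) := by rw [nsmul_eq_mul]
  have hcardsR : (S.card : ℝ) + (Sc.card : ℝ) = (AF.card : ℝ) := by exact_mod_cast hcards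
  have hS0 : (0 : ℝ) ≤ (S.card : ℝ) := Nat.cast_nonneg _
  have hSc0 : (0 : ℝ) ≤ (Sc.card : ℝ) := Nat.cast_nonneg _
  have hmain : (1 - α) * (n : ℝ) ^ 2 ≤ (S.card : ℝ) * n + (Sc.card : ℝ) * ((k : ℝ) - 1) := by
    linarith
  rcases eq_or_lt_of_le hα0 with h0 | hαpos
  · -- α = 0, s = 0
    have hs0' : s = 0 := by rw [hs, ← h0]; simp
    rw [hs0']
    have hkk : (k : ℝ) - 1 ≤ (n : ℝ) - 1 := by linarith
    nlinarith [mul_le_mul_of_nonneg_left hkk hSc0]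
  · -- α > 0, s > 0
    have hspos : 0 < s := Real.sqrt_pos.mpr (by linarith)
    by_contra hcon
    push_neg at hcon
    have hkk : (k : ℝ) - 1 ≤ (n : ℝ) - s * n := by linarith
    have hb3 : (Sc.card : ℝ) * ((k : ℝ) - 1) ≤ (Sc.card : ℝ) * ((n : ℝ) - s * n) :=
      mul_le_mul_of_nonneg_left hkk hSc0
    have hScle : (Sc.card : ℝ) ≤ (n : ℝ) - (S.card : ℝ) := by linarith
    have hb4 : (Sc.card : ℝ) * ((n : ℝ) - s * n) ≤ ((n : ℝ) - (S.card : ℝ)) * ((n : ℝ) - s * n) :=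
      mul_le_mul_of_nonneg_right hScle hpos.le
    nlinarith [mul_lt_mul_of_pos_right hcon (mul_pos hspos hn)]

/-- Build the final complete bipartite configuration from two cross-adjacent finsets. -/
lemma final (hdisj : Disjoint A B)
    (S T : Finset V) (hS : ↑S ⊆ A) (hT : ↑T ⊆ B)
    (hadj : ∀ x ∈ S, ∀ y ∈ T, G.Adj x y)
    (c : ℝ) (hcS : c ≤ (S.card : ℝ)) (hcT : c ≤ (T.card : ℝ)) :
    ∃ r : ℕ, c ≤ (r : ℝ) ∧
      ∃ S' T' : Finset V, Disjoint S' T' ∧ S'.card = r ∧ T'.card = r ∧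
        ∀ x ∈ S', ∀ y ∈ T', G.Adj x y := by
  classical
  refine ⟨min S.card T.card, ?_, ?_⟩
  · rcases min_cases S.card T.card with ⟨h, _⟩ | ⟨h, _⟩ <;> rw [h]
    · exact hcS
    · exact hcT
  · obtain ⟨S', hS'sub, hS'card⟩ :=
      Finset.exists_subset_card_eq (min_le_left S.card T.card)
    obtain ⟨T', hT'sub, hT'card⟩ :=
      Finset.exists_subset_card_eq (min_le_right S.card T.card)
    refine ⟨S', T', ?_, hS'card, hT'card, fun x hx y hy =>
      hadj x (hS'sub hx) y (hT'sub hy)⟩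
    rw [Finset.disjoint_left]
    intro x hxS hxT
    exact Set.disjoint_left.mp hdisj (hS (hS'sub hxS)) (hT (hT'sub hxT))

end Aux

/-- Let `α ∈ [0,1]` and `G` a bipartite graph with parts `A`, `B` of sizes at
most `n`.  If `H` is a subgraph of `G` with `|E(H)| ≥ (1−α)n²` whose edge set is
a clique in `L(G)²`, then `G` contains a complete bipartite subgraph `K_{r,r}`
with `r ≥ (1 − √(2α))·n`. -/
theorem stmt8 {V : Type*} [Fintype V] (G : SimpleGraph V)
    (A B : Set V) (hdisj : Disjoint A B) (hcover : A ∪ B = Set.univ)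
    (hbip : ∀ x y, G.Adj x y → (x ∈ A ∧ y ∈ B) ∨ (x ∈ B ∧ y ∈ A))
    (n : ℕ) (hA : A.ncard ≤ n) (hB : B.ncard ≤ n)
    (α : ℝ) (hα : 0 ≤ α ∧ α ≤ 1)
    (H : G.Subgraph)
    (hclique : ∀ e ∈ H.edgeSet, ∀ f ∈ H.edgeSet, EdgesClose G e f)
    (hsize : (1 - α) * (n : ℝ) ^ 2 ≤ (H.edgeSet.ncard : ℝ)) :
    ∃ r : ℕ, (1 - Real.sqrt (2 * α)) * (n : ℝ) ≤ (r : ℝ) ∧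
      ∃ S T : Finset V, Disjoint S T ∧ S.card = r ∧ T.card = r ∧
        ∀ x ∈ S, ∀ y ∈ T, G.Adj x y := by
  classical
  set s : ℝ := Real.sqrt (2 * α) with hs
  have hs0 : 0 ≤ s := Real.sqrt_nonneg _
  by_cases hdeg : (1 - s) * n ≤ 0
  · exact ⟨0, by simpa using hdeg, ∅, ∅, by simp, rfl, rfl, by simp⟩
  push_neg at hdeg
  have hn : 0 < (n : ℝ) := by
    rcases (Nat.cast_nonneg n : (0:ℝ) ≤ n).lt_or_eq with h | h
    · exact h
    · exfalso; rw [← h] at hdeg; simp at hdeg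
  have hs1 : s < 1 := by nlinarith
  have hbip' : ∀ x y, G.Adj x y → (x ∈ B ∧ y ∈ A) ∨ (x ∈ A ∧ y ∈ B) :=
    fun x y h => (hbip x y h).symm
  obtain ⟨S, hSA, hScard, hSdeg⟩ := side hdisj hbip hA hB hα.1 hsize hn hs1
  obtain ⟨T, hTB, hTcard, hTdeg⟩ := side hdisj.symm hbip' hB hA hα.1 hsize hn hs1
  by_cases hall : ∀ a ∈ S, ∀ b ∈ T, G.Adj a b
  · exact final hdisj S T hSA hTB hall _ hScard hTcard
  · push_neg at hall
    obtain ⟨a, haS, b, hbT, hnadj⟩ := hall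
    have haA : a ∈ A := hSA haS
    have hbB : b ∈ B := hTB hbT
    have hab : a ≠ b := fun h => Set.disjoint_left.mp hdisj haA (h ▸ hbB)
    set NA : Finset V := (Set.toFinite (H.neighborSet b)).toFinset with hNA
    set NB : Finset V := (Set.toFinite (H.neighborSet a)).toFinset with hNB
    have hNAsub : ↑NA ⊆ A := by
      intro x hx
      exact nbhd_sub hdisj.symm hbip' H hbB (by simpa [hNA] using hx)
    have hNBsub : ↑NB ⊆ B := by
      intro x hx
      exact nbhd_sub hdisj hbip H haA (by simpa [hNB] using hx)
    have hNAcard : (1 - s) * n ≤ (NA.card : ℝ) := by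
      have : NA.card = (H.neighborSet b).ncard :=
        (Set.ncard_eq_toFinset_card _ _).symm
      rw [this]
      calc (1 - s) * n = (n : ℝ) - s * n := by ring
        _ ≤ _ := hTdeg b hbT
    have hNBcard : (1 - s) * n ≤ (NB.card : ℝ) := by
      have : NB.card = (H.neighborSet a).ncard :=
        (Set.ncard_eq_toFinset_card _ _).symm
      rw [this]
      calc (1 - s) * n = (n : ℝ) - s * n := by ring
        _ ≤ _ := hSdeg a haS
    have hadj : ∀ u ∈ NA, ∀ v ∈ NB, G.Adj u v := by
      intro u hu v hv
      have hub : H.Adj b u := by simpa [hNA] using hu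
      have hav : H.Adj a v := by simpa [hNB] using hv
      have huA : u ∈ A := hNAsub hu
      have hvB : v ∈ B := hNBsub hv
      have he1 : s(a, v) ∈ H.edgeSet := SimpleGraph.Subgraph.mem_edgeSet.mpr hav
      have he2 : s(u, b) ∈ H.edgeSet := SimpleGraph.Subgraph.mem_edgeSet.mpr hub.symm
      obtain ⟨p, q, hp, hq, hor⟩ := hclique _ he1 _ he2
      rcases Sym2.mem_iff.mp hp with rfl | rfl <;>
        rcases Sym2.mem_iff.mp hq with rfl | rfl
      · -- p = a, q = u
        exfalso
        rcases hor with h | h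
        · subst h; exact hnadj hub.symm.adj_sub
        · rcases hbip _ _ h with ⟨_, hB2⟩ | ⟨hB2, _⟩
          · exact Set.disjoint_left.mp hdisj huA hB2
          · exact Set.disjoint_left.mp hdisj haA hB2
      · -- p = a, q = b
        exfalso
        rcases hor with h | h
        · exact hab h
        · exact hnadj h
      · -- p = v, q = u
        rcases hor with h | h
        · exfalso; rw [h] at hvB; exact Set.disjoint_left.mp hdisj huA hvB
        · exact h.symm
      · -- p = v, q = b
        exfalso
        rcases hor with h | h
        · subst h; exact hnadj hav.adj_sub
        · rcases hbip _ _ h with ⟨hB2, _⟩ | ⟨_, hB2⟩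
          · exact Set.disjoint_left.mp hdisj hB2 hvB
          · exact Set.disjoint_left.mp hdisj hB2 hbB
      -- done
    exact final hdisj NA NB hNAsub hNBsub hadj _ hNAcard hNBcard
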